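/- For every ε > 0 there exist δ > 0 and X_0 such that the following holds. Let X ≥ X_0 and X < Y ≤ X², and let f : ℕ → ℂ be completely multiplicative with |f(p)| ≤ 1 for every prime p, satisfying |∑_{n ≤ x} f(n)| ≤ δ·x for every real x with X < x ≤ Y. Define h(n) = ∑_{ab = n} f(a)·conj(f(b)) (sum over ordered pairs of positive integers a, b with ab = n). Then |∑_{n ≤ Y} h(n)| ≤ Y·log(X²/Y) + ε·Y·log Y. -/

import Mathlib

open Finset

lemma GS_aux_abs_le (f : ℕ → ℂ) (h1 : f 1 = 1)
    (hmul : ∀ m n : ℕ, 0 < m → 0 < n → f (m * n) = f m * f n)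
    (hp : ∀ p : ℕ, p.Prime → ‖f p‖ ≤ 1) :
    ∀ n : ℕ, 1 ≤ n → ‖f n‖ ≤ 1 := by
  intro n
  induction n using Nat.strong_induction_on with
  | _ n ih =>
    intro hn
    rcases eq_or_lt_of_le hn with h | h
    · rw [← h, h1]; simp
    · have h2 : 2 ≤ n := h
      have hpf : n.minFac.Prime := Nat.minFac_prime (by omega)
      obtain ⟨m, hm⟩ := Nat.minFac_dvd n
      have hp2 : 2 ≤ n.minFac := hpf.two_le
      have hm0 : 0 < m := by
        rcases Nat.eq_zero_or_pos m with h0 | h0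
        · exfalso; rw [h0, mul_zero] at hm; omega
        · exact h0
      have hmlt : m < n := by
        nlinarith
      rw [hm, hmul _ _ (by omega) hm0, norm_mul]
      calc ‖f n.minFac‖ * ‖f m‖
          ≤ 1 * 1 := by
            apply mul_le_mul (hp _ hpf) (ih m hmlt hm0) (by positivity) (by norm_num)
        _ = 1 := by ring

lemma GS_aux_identity (f g : ℕ → ℂ) (N K : ℕ) (hK1 : K^2 ≤ N) (hK2 : N < (K+1)^2) :
    ∑ n ∈ Icc 1 N, (∑ d ∈ n.divisors, f d * g (n / d)) =
      ∑ a ∈ Icc 1 K, f a * (∑ b ∈ Icc 1 (N/a), g b)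
      + ∑ b ∈ Icc 1 K, (∑ a ∈ Icc 1 (N/b), f a) * g b
      - (∑ a ∈ Icc 1 K, f a) * (∑ b ∈ Icc 1 K, g b) := by
  have hKN : K ≤ N := by nlinarith
  -- rewrite LHS as sum over pairs
  have step1 : ∑ n ∈ Icc 1 N, (∑ d ∈ n.divisors, f d * g (n / d)) =
      ∑ p ∈ (Icc 1 N ×ˢ Icc 1 N).filter (fun p => p.1 * p.2 ≤ N), f p.1 * g p.2 := by
    have : ∀ n ∈ Icc 1 N, (∑ d ∈ n.divisors, f d * g (n / d)) =
        ∑ p ∈ n.divisorsAntidiagonal, f p.1 * g p.2 := by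
      intro n _
      exact (Nat.sum_divisorsAntidiagonal (fun a b => f a * g b)).symm
    rw [Finset.sum_congr rfl this, ← Finset.sum_biUnion]
    · congr 1
      ext ⟨a, b⟩
      simp only [Finset.mem_biUnion, Finset.mem_Icc, Nat.mem_divisorsAntidiagonal,
        Finset.mem_filter, Finset.mem_product]
      constructor
      · rintro ⟨n, ⟨hn1, hn2⟩, hab, hne⟩
        have ha : 1 ≤ a := by
          by_contra hc
          push_neg at hc
          interval_cases a <;> simp_all
        have hb : 1 ≤ b := by
          by_contra hc
          push_neg at hc
          interval_cases b <;> simp_all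
        refine ⟨⟨⟨ha, ?_⟩, hb, ?_⟩, ?_⟩ <;> nlinarith
      · rintro ⟨⟨⟨ha, _⟩, hb, _⟩, hab⟩
        exact ⟨a * b, ⟨by nlinarith, hab⟩, rfl, by nlinarith⟩
    · intro x hx y hy hxy
      simp only [Finset.disjoint_left]
      intro p hpx hpy
      rw [Nat.mem_divisorsAntidiagonal] at hpx hpy
      exact hxy (hpx.1.symm.trans hpy.1)
  rw [step1, Finset.sum_filter]
  -- pointwise split
  have split : ∀ p : ℕ × ℕ, p ∈ Icc 1 N ×ˢ Icc 1 N →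
      (if p.1 * p.2 ≤ N then f p.1 * g p.2 else 0) =
        (if p.1 ≤ K ∧ p.1 * p.2 ≤ N then f p.1 * g p.2 else 0)
        + (if p.2 ≤ K ∧ p.1 * p.2 ≤ N then f p.1 * g p.2 else 0)
        - (if p.1 ≤ K ∧ p.2 ≤ K then f p.1 * g p.2 else 0) := by
    rintro ⟨a, b⟩ hp
    by_cases h1 : a ≤ K <;> by_cases h2 : b ≤ K
    · have : a * b ≤ N := by nlinarith
      simp [h1, h2, this]
    · by_cases h3 : a * b ≤ N <;> simp [h1, h2, h3]
    · by_cases h3 : a * b ≤ N <;> simp [h1, h2, h3]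
    · have : ¬ (a * b ≤ N) := by push_neg; nlinarith
      simp [h1, h2, this]
  rw [Finset.sum_congr rfl split, Finset.sum_sub_distrib, Finset.sum_add_distrib]
  congr 1
  · congr 1
    -- first piece
    · rw [Finset.sum_product]
      rw [← Finset.sum_subset (Finset.Icc_subset_Icc_right hKN : Icc 1 K ⊆ Icc 1 N)]
      · apply Finset.sum_congr rfl
        intro a ha
        rw [Finset.mem_Icc] at ha
        have haK : a ≤ K := ha.2
        have ha1 : 1 ≤ a := ha.1
        have hdiv : ∀ b, a * b ≤ N ↔ b ≤ N / a := by
          intro b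
          rw [Nat.le_div_iff_mul_le (by omega)]
          constructor <;> intro h <;> nlinarith
        rw [Finset.mul_sum]
        rw [← Finset.sum_subset (Finset.Icc_subset_Icc_right (Nat.div_le_self N a))]
        · apply Finset.sum_congr rfl
          intro b hb
          rw [Finset.mem_Icc] at hb
          have : a * b ≤ N := (hdiv b).mpr hb.2
          simp [haK, this]
        · intro b hb hb2
          rw [Finset.mem_Icc] at hb hb2
          have : ¬ (a * b ≤ N) := by rw [hdiv]; omega
          simp [this]
      · intro a ha ha2
        rw [Finset.mem_Icc] at ha ha2
        have : ¬ (a ≤ K) := by omega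
        apply Finset.sum_eq_zero
        intro b _
        simp [this]
    -- second piece
    · rw [Finset.sum_product_right]
      rw [← Finset.sum_subset (Finset.Icc_subset_Icc_right hKN : Icc 1 K ⊆ Icc 1 N)]
      · apply Finset.sum_congr rfl
        intro b hb
        rw [Finset.mem_Icc] at hb
        have hbK : b ≤ K := hb.2
        have hb1 : 1 ≤ b := hb.1
        have hdiv : ∀ a, a * b ≤ N ↔ a ≤ N / b := by
          intro a
          rw [Nat.le_div_iff_mul_le (by omega)]
        rw [Finset.sum_mul]
        rw [← Finset.sum_subset (Finset.Icc_subset_Icc_right (Nat.div_le_self N b))]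
        · apply Finset.sum_congr rfl
          intro a ha
          rw [Finset.mem_Icc] at ha
          have : a * b ≤ N := (hdiv a).mpr ha.2
          simp [hbK, this]
        · intro a ha ha2
          rw [Finset.mem_Icc] at ha ha2
          have : ¬ (a * b ≤ N) := by rw [hdiv]; omega
          simp [this]
      · intro b hb hb2
        rw [Finset.mem_Icc] at hb hb2
        have : ¬ (b ≤ K) := by omega
        apply Finset.sum_eq_zero
        intro a _
        simp [this]
  -- third piece
  · rw [Finset.sum_product, Finset.sum_mul_sum]
    rw [← Finset.sum_subset (Finset.Icc_subset_Icc_right hKN : Icc 1 K ⊆ Icc 1 N)]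
    · apply Finset.sum_congr rfl
      intro a ha
      rw [Finset.mem_Icc] at ha
      rw [← Finset.sum_subset (Finset.Icc_subset_Icc_right hKN : Icc 1 K ⊆ Icc 1 N)]
      · apply Finset.sum_congr rfl
        intro b hb
        rw [Finset.mem_Icc] at hb
        simp [ha.2, hb.2]
      · intro b hb hb2
        rw [Finset.mem_Icc] at hb hb2
        have : ¬ (b ≤ K) := by omega
        simp [this]
    · intro a ha ha2
      rw [Finset.mem_Icc] at ha ha2
      have : ¬ (a ≤ K) := by omega
      apply Finset.sum_eq_zero
      intro b _
      simp [this]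

lemma GS_harmonic_cast (n : ℕ) : (harmonic n : ℝ) = ∑ a ∈ Icc 1 n, (a:ℝ)⁻¹ := by
  rw [harmonic_eq_sum_Icc]
  push_cast
  rfl

lemma GS_aux_sum_inv (m K : ℕ) (hm : 1 ≤ m) (hmK : m ≤ K + 1) (hK : 1 ≤ K) :
    ∑ a ∈ Icc m K, (a:ℝ)⁻¹ ≤ 1 + Real.log K - Real.log m := by
  have hsplit : (∑ a ∈ Icc 1 (m-1), (a:ℝ)⁻¹) + ∑ a ∈ Icc m K, (a:ℝ)⁻¹
      = ∑ a ∈ Icc 1 K, (a:ℝ)⁻¹ := by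
    have h1 : Icc 1 (m-1) = Ioc 0 (m-1) := by rw [← Finset.Icc_add_one_left_eq_Ioc]; rfl
    have h2 : Icc m K = Ioc (m-1) K := by
      rw [← Finset.Icc_add_one_left_eq_Ioc]
      congr 1
      omega
    have h3 : Icc 1 K = Ioc 0 K := by rw [← Finset.Icc_add_one_left_eq_Ioc]; rfl
    rw [h1, h2, h3]
    exact Finset.sum_Ioc_consecutive _ (by omega) (by omega)
  have hupper : ∑ a ∈ Icc 1 K, (a:ℝ)⁻¹ ≤ 1 + Real.log K := by
    rw [← GS_harmonic_cast]; exact harmonic_le_one_add_log K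
  have hlower : Real.log m ≤ ∑ a ∈ Icc 1 (m-1), (a:ℝ)⁻¹ := by
    rw [← GS_harmonic_cast]
    have := log_add_one_le_harmonic (m-1)
    have hc : ((m - 1 : ℕ) + 1 : ℕ) = m := by omega
    rw [show ((m-1:ℕ)+1 : ℕ) = m from hc] at this
    exact this
  linarith

set_option maxHeartbeats 1000000 in
theorem lemma5_GS (ε : ℝ) (hε : 0 < ε) :
    ∃ δ > (0:ℝ), ∃ X₀ : ℝ, ∀ X Y : ℝ, X₀ ≤ X → X < Y → Y ≤ X ^ 2 →
      ∀ f : ℕ → ℂ,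
        f 1 = 1 → (∀ m n : ℕ, 0 < m → 0 < n → f (m * n) = f m * f n) →
        (∀ p : ℕ, p.Prime → ‖f p‖ ≤ 1) →
        (∀ x : ℝ, X < x → x ≤ Y →
          ‖∑ n ∈ Finset.Icc 1 ⌊x⌋₊, f n‖ ≤ δ * x) →
        ∀ h : ℕ → ℂ,
          (∀ n : ℕ, h n = ∑ d ∈ n.divisors, f d * (starRingEnd ℂ) (f (n / d))) →
          ‖∑ n ∈ Finset.Icc 1 ⌊Y⌋₊, h n‖
            ≤ Y * Real.log (X ^ 2 / Y) + ε * Y * Real.log Y := by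
  refine ⟨ε/2, by positivity, Real.exp (2 + 6/ε) + 16, ?_⟩
  intro X Y hXX hXY hYX2 f hf1 hfmul hfp hS h hh
  have hX16 : (16:ℝ) ≤ X := le_trans (le_add_of_nonneg_left (Real.exp_pos _).le) hXX
  have hX0 : (0:ℝ) < X := by linarith
  have hY0 : (0:ℝ) < Y := by linarith
  have hY16 : (16:ℝ) < Y := by linarith
  have hlogX : 2 + 6/ε ≤ Real.log X := by
    rw [← Real.log_exp (2 + 6/ε)]
    exact Real.log_le_log (Real.exp_pos _) (by linarith)
  have hlogXY : Real.log X < Real.log Y := Real.log_lt_log hX0 hXY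
  have hL : 2 + 6/ε ≤ Real.log Y := by linarith
  set N := ⌊Y⌋₊ with hN
  set K := ⌊Real.sqrt Y⌋₊ with hK
  have hsY0 : 0 < Real.sqrt Y := Real.sqrt_pos.mpr hY0
  have hsYX : Real.sqrt Y ≤ X := by
    calc Real.sqrt Y ≤ Real.sqrt (X^2) := Real.sqrt_le_sqrt hYX2
      _ = X := Real.sqrt_sq hX0.le
  have hsY4 : (4:ℝ) ≤ Real.sqrt Y := by
    have : Real.sqrt 16 ≤ Real.sqrt Y := Real.sqrt_le_sqrt hY16.le
    rw [show (16:ℝ) = 4^2 by norm_num, Real.sqrt_sq (by norm_num : (0:ℝ) ≤ 4)] at this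
    exact this
  have hK4 : 4 ≤ K := Nat.le_floor (by exact_mod_cast hsY4)
  have hK1 : 1 ≤ K := by omega
  have hKsY : (K:ℝ) ≤ Real.sqrt Y := Nat.floor_le hsY0.le
  have hsYK1 : Real.sqrt Y < K + 1 := Nat.lt_floor_add_one _
  have hsq : Real.sqrt Y ^ 2 = Y := Real.sq_sqrt hY0.le
  have hK2N : K^2 ≤ N := by
    apply Nat.le_floor
    push_cast
    nlinarith
  have hNK2 : N < (K+1)^2 := by
    have h1 : (N:ℝ) ≤ Y := Nat.floor_le hY0.le
    have h2 : Y < ((K:ℝ)+1)^2 := by nlinarith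
    have : (N:ℝ) < ((K+1:ℕ):ℝ)^2 := by push_cast; linarith
    exact_mod_cast this
  have hN0 : 1 ≤ N := Nat.le_floor (by norm_num; linarith)
  -- |f n| ≤ 1
  have habsf : ∀ n : ℕ, 1 ≤ n → ‖f n‖ ≤ 1 := GS_aux_abs_le f hf1 hfmul hfp
  -- trivial bound on partial sums
  have htriv : ∀ m : ℕ, ‖∑ n ∈ Icc 1 m, f n‖ ≤ m := by
    intro m
    calc ‖∑ n ∈ Icc 1 m, f n‖ ≤ ∑ n ∈ Icc 1 m, ‖f n‖ := by
          exact norm_sum_le _ _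
      _ ≤ ∑ n ∈ Icc 1 m, 1 := by
          apply Finset.sum_le_sum
          intro n hn
          exact habsf n (Finset.mem_Icc.mp hn).1
      _ = m := by simp
  -- the identity
  have hid := GS_aux_identity f (fun n => (starRingEnd ℂ) (f n)) N K hK2N hNK2
  have hLHS : ∑ n ∈ Icc 1 N, h n =
      ∑ a ∈ Icc 1 K, f a * (∑ b ∈ Icc 1 (N/a), (starRingEnd ℂ) (f b))
      + ∑ b ∈ Icc 1 K, (∑ a ∈ Icc 1 (N/b), f a) * (starRingEnd ℂ) (f b)
      - (∑ a ∈ Icc 1 K, f a) * (∑ b ∈ Icc 1 K, (starRingEnd ℂ) (f b)) := by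
    rw [← hid]
    exact Finset.sum_congr rfl (fun n _ => hh n)
  -- bound on S(N/a) for 1 ≤ a
  have hSb : ∀ a : ℕ, 1 ≤ a → ‖∑ n ∈ Icc 1 (N/a), f n‖
      ≤ ε/2 * Y * (a:ℝ)⁻¹ + (if X < Y / a then 0 else Y * (a:ℝ)⁻¹) := by
    intro a ha
    have ha0 : (0:ℝ) < a := by exact_mod_cast ha
    by_cases hc : X < Y / a
    · rw [if_pos hc]
      have h1 := hS (Y / a) hc (div_le_self hY0.le (by exact_mod_cast ha))
      rw [Nat.floor_div_natCast] at h1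
      calc ‖∑ n ∈ Icc 1 (N/a), f n‖ ≤ ε/2 * (Y / a) := h1
        _ = ε/2 * Y * (a:ℝ)⁻¹ + 0 := by ring
    · rw [if_neg hc]
      calc ‖∑ n ∈ Icc 1 (N/a), f n‖ ≤ ((N/a : ℕ):ℝ) := htriv _
        _ ≤ (N:ℝ)/a := Nat.cast_div_le
        _ ≤ Y / a := by
            gcongr
            exact Nat.floor_le hY0.le
        _ ≤ ε/2 * Y * (a:ℝ)⁻¹ + Y * (a:ℝ)⁻¹ := by
            rw [div_eq_mul_inv]
            have : 0 ≤ ε/2 * Y * (a:ℝ)⁻¹ := by positivity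
            linarith
  -- per-term bounds
  set B : ℕ → ℝ := fun a => ε/2 * Y * (a:ℝ)⁻¹ + (if X < Y / a then 0 else Y * (a:ℝ)⁻¹) with hB
  have hBnonneg : ∀ a : ℕ, 1 ≤ a → 0 ≤ B a := by
    intro a ha
    have : (0:ℝ) < a := by exact_mod_cast ha
    simp only [hB]
    by_cases hc : X < Y / a <;> simp [hc] <;> positivity
  have hterm1 : ∀ a ∈ Icc 1 K,
      ‖f a * (∑ b ∈ Icc 1 (N/a), (starRingEnd ℂ) (f b))‖ ≤ B a := by
    intro a ha
    obtain ⟨ha1, haK⟩ := Finset.mem_Icc.mp ha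
    rw [norm_mul]
    have h1 : ‖∑ b ∈ Icc 1 (N/a), (starRingEnd ℂ) (f b)‖
        = ‖∑ b ∈ Icc 1 (N/a), f b‖ := by
      rw [← map_sum, Complex.norm_conj]
    calc ‖f a‖ * ‖∑ b ∈ Icc 1 (N/a), (starRingEnd ℂ) (f b)‖
        ≤ 1 * B a := by
          apply mul_le_mul (habsf a ha1) ?_ (norm_nonneg _) (by norm_num)
          rw [h1]; exact hSb a ha1
      _ = B a := one_mul _
  have hterm2 : ∀ b ∈ Icc 1 K,
      ‖(∑ a ∈ Icc 1 (N/b), f a) * (starRingEnd ℂ) (f b)‖ ≤ B b := by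
    intro b hb
    obtain ⟨hb1, hbK⟩ := Finset.mem_Icc.mp hb
    rw [norm_mul, Complex.norm_conj]
    calc ‖∑ a ∈ Icc 1 (N/b), f a‖ * ‖f b‖
        ≤ B b * 1 := by
          apply mul_le_mul (hSb b hb1) (habsf b hb1) (norm_nonneg _) (hBnonneg b hb1)
      _ = B b := mul_one _
  -- bound the sum of B
  have hYXsY : Y / X ≤ Real.sqrt Y := by
    rw [div_le_iff₀ hX0]
    nlinarith
  set m := ⌈Y/X⌉₊ with hm
  have hm1 : 1 ≤ m := Nat.one_le_iff_ne_zero.mpr (by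
    simp only [hm, ne_eq, Nat.ceil_eq_zero, not_le]
    positivity)
  have hmK : m ≤ K + 1 := by
    apply Nat.ceil_le.mpr
    push_cast
    linarith
  have hlogm : Real.log Y - Real.log X ≤ Real.log m := by
    have h1 : Y / X ≤ (m:ℝ) := Nat.le_ceil _
    calc Real.log Y - Real.log X = Real.log (Y/X) := (Real.log_div hY0.ne' hX0.ne').symm
      _ ≤ Real.log m := Real.log_le_log (div_pos hY0 hX0) h1
  have hlogK : Real.log K ≤ Real.log Y / 2 := by
    calc Real.log K ≤ Real.log (Real.sqrt Y) := by
          apply Real.log_le_log ?_ hKsY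
          exact_mod_cast (by omega : 0 < K)
      _ = Real.log Y / 2 := Real.log_sqrt hY0.le
  have hBsum : ∑ a ∈ Icc 1 K, B a
      ≤ ε/2 * Y * (1 + Real.log K) + Y * (1 + Real.log K - (Real.log Y - Real.log X)) := by
    simp only [hB]
    rw [Finset.sum_add_distrib]
    have hA : ∑ a ∈ Icc 1 K, ε/2 * Y * (a:ℝ)⁻¹ ≤ ε/2 * Y * (1 + Real.log K) := by
      rw [← Finset.mul_sum]
      apply mul_le_mul_of_nonneg_left ?_ (by positivity)
      rw [← GS_harmonic_cast]
      exact harmonic_le_one_add_log K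
    have hIte : ∑ a ∈ Icc 1 K, (if X < Y / (a:ℝ) then 0 else Y * (a:ℝ)⁻¹)
        ≤ Y * (1 + Real.log K - (Real.log Y - Real.log X)) := by
      have hflip : ∀ a ∈ Icc 1 K, (if X < Y / (a:ℝ) then (0:ℝ) else Y * (a:ℝ)⁻¹)
          = (if ¬ X < Y / (a:ℝ) then Y * (a:ℝ)⁻¹ else 0) := by
        intro a _
        by_cases hc : X < Y / (a:ℝ) <;> simp [hc]
      rw [Finset.sum_congr rfl hflip, ← Finset.sum_filter]
      have hsub : (Icc 1 K).filter (fun a : ℕ => ¬ X < Y / ((a:ℕ):ℝ)) ⊆ Icc m K := by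
        intro a ha
        obtain ⟨ha', hc⟩ := Finset.mem_filter.mp ha
        obtain ⟨ha1, haK⟩ := Finset.mem_Icc.mp ha'
        push_neg at hc
        have ha0 : (0:ℝ) < a := by exact_mod_cast ha1
        have : Y / X ≤ (a:ℝ) := by
          rw [div_le_iff₀ hX0]
          rw [div_le_iff₀ ha0] at hc
          linarith [mul_comm X (a:ℝ)]
        exact Finset.mem_Icc.mpr ⟨Nat.ceil_le.mpr this, haK⟩
      calc ∑ a ∈ (Icc 1 K).filter (fun a : ℕ => ¬ X < Y / ((a:ℕ):ℝ)), Y * (a:ℝ)⁻¹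
          ≤ ∑ a ∈ Icc m K, Y * (a:ℝ)⁻¹ := by
            apply Finset.sum_le_sum_of_subset_of_nonneg hsub
            intro a ha _
            have ha1 : 1 ≤ a := (Finset.mem_Icc.mp ha).1.trans' hm1
            have : (0:ℝ) < a := by exact_mod_cast ha1
            positivity
        _ = Y * ∑ a ∈ Icc m K, (a:ℝ)⁻¹ := (Finset.mul_sum _ _ _).symm
        _ ≤ Y * (1 + Real.log K - Real.log m) := by
            apply mul_le_mul_of_nonneg_left (GS_aux_sum_inv m K hm1 hmK hK1) hY0.le
        _ ≤ Y * (1 + Real.log K - (Real.log Y - Real.log X)) := by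
            apply mul_le_mul_of_nonneg_left ?_ hY0.le
            linarith
    linarith
  -- corner term
  have hC : ‖(∑ a ∈ Icc 1 K, f a) * (∑ b ∈ Icc 1 K, (starRingEnd ℂ) (f b))‖ ≤ Y := by
    rw [norm_mul]
    have h1 : ‖∑ b ∈ Icc 1 K, (starRingEnd ℂ) (f b)‖
        = ‖∑ b ∈ Icc 1 K, f b‖ := by
      rw [← map_sum, Complex.norm_conj]
    rw [h1]
    calc ‖∑ a ∈ Icc 1 K, f a‖ * ‖∑ b ∈ Icc 1 K, f b‖
        ≤ (K:ℝ) * (K:ℝ) := by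
          apply mul_le_mul (htriv K) (htriv K) (norm_nonneg _) (Nat.cast_nonneg _)
      _ ≤ Y := by nlinarith
  -- assemble
  rw [hLHS]
  have hstep : ‖∑ a ∈ Icc 1 K, f a * (∑ b ∈ Icc 1 (N/a), (starRingEnd ℂ) (f b))
      + ∑ b ∈ Icc 1 K, (∑ a ∈ Icc 1 (N/b), f a) * (starRingEnd ℂ) (f b)
      - (∑ a ∈ Icc 1 K, f a) * (∑ b ∈ Icc 1 K, (starRingEnd ℂ) (f b))‖
      ≤ (∑ a ∈ Icc 1 K, B a) + (∑ a ∈ Icc 1 K, B a) + Y := by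
    refine le_trans (norm_sub_le _ _) ?_
    have h1 : ‖∑ a ∈ Icc 1 K, f a * (∑ b ∈ Icc 1 (N/a), (starRingEnd ℂ) (f b))‖
        ≤ ∑ a ∈ Icc 1 K, B a :=
      le_trans (norm_sum_le _ _) (Finset.sum_le_sum hterm1)
    have h2 : ‖∑ b ∈ Icc 1 K, (∑ a ∈ Icc 1 (N/b), f a) * (starRingEnd ℂ) (f b)‖
        ≤ ∑ a ∈ Icc 1 K, B a :=
      le_trans (norm_sum_le _ _) (Finset.sum_le_sum hterm2)
    have h3 := le_trans (norm_add_le _ _) (add_le_add h1 h2)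
    linarith
  refine le_trans hstep ?_
  -- final arithmetic
  have hlog2 : Real.log (X^2 / Y) = 2 * Real.log X - Real.log Y := by
    rw [Real.log_div (by positivity) hY0.ne', Real.log_pow]
    push_cast
    ring
  rw [hlog2]
  have hεL : 2 * ε + 6 ≤ ε * Real.log Y := by
    have h1 := mul_le_mul_of_nonneg_left hL hε.le
    have h2 : ε * (2 + 6/ε) = 2 * ε + 6 := by field_simp
    linarith
  have e1 : ε/2 * Y * (1 + Real.log K) ≤ ε/2 * Y * (1 + Real.log Y / 2) := by
    apply mul_le_mul_of_nonneg_left (by linarith) (by positivity)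
  have e2 : Y * (1 + Real.log K - (Real.log Y - Real.log X))
      ≤ Y * (1 + Real.log Y / 2 - (Real.log Y - Real.log X)) := by
    apply mul_le_mul_of_nonneg_left (by linarith) hY0.le
  have e3 : (ε + 3) * Y ≤ ε/2 * Real.log Y * Y := by
    apply mul_le_mul_of_nonneg_right ?_ hY0.le
    linarith
  nlinarith [hBsum, e1, e2, e3]
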